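/- Swapping a relevant item at position i with an adjacent non-relevant item at position i+1 (moving the relevant item down) strictly decreases average precision. -/
import Mathlib


noncomputable def prec (a : ℕ → ℕ) (i : ℕ) : ℚ :=
  (∑ j ∈ Finset.Icc 1 i, (a j : ℚ)) / i

noncomputable def AP (a : ℕ → ℕ) (K : ℕ) : ℚ :=
  (∑ i ∈ Finset.Icc 1 K, (a i : ℚ) * prec a i) / (∑ i ∈ Finset.Icc 1 K, (a i : ℚ))

theorem stmt9 (K i : ℕ) (a : ℕ → ℕ) (hbin : ∀ j, a j ≤ 1)
    (hi1 : 1 ≤ i) (hiK : i < K) (hai : a i = 1) (hai1 : a (i + 1) = 0) :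
    AP (Function.update (Function.update a i 0) (i + 1) 1) K < AP a K := by
  set a' := Function.update (Function.update a i 0) (i + 1) 1 with ha'def
  have hne : i ≠ i + 1 := by omega
  have ha'i : a' i = 0 := by simp [ha'def, Function.update, hne]
  have ha'i1 : a' (i+1) = 1 := by simp [ha'def, Function.update]
  have ha'other : ∀ t, t ≠ i → t ≠ i+1 → a' t = a t := by
    intro t h1 h2; simp [ha'def, Function.update, h1, h2]
  have hind : ∀ t, ((a' t : ℚ)) = (a t : ℚ) + (if t = i+1 then (1:ℚ) else 0)
      - (if t = i then (1:ℚ) else 0) := by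
    intro t
    by_cases h1 : t = i
    · subst h1; rw [ha'i, hai]; simp [hne]
    · by_cases h2 : t = i+1
      · subst h2; rw [ha'i1, hai1]; simp [h1]
      · rw [ha'other t h1 h2]; simp [h1, h2]
  have hS : ∀ j, (∑ t ∈ Finset.Icc 1 j, (a' t : ℚ))
      = (∑ t ∈ Finset.Icc 1 j, (a t : ℚ))
        + (if i+1 ∈ Finset.Icc 1 j then (1:ℚ) else 0)
        - (if i ∈ Finset.Icc 1 j then (1:ℚ) else 0) := by
    intro j
    simp_rw [hind]
    rw [Finset.sum_sub_distrib, Finset.sum_add_distrib, Finset.sum_ite_eq',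
      Finset.sum_ite_eq']
  set Si := ∑ t ∈ Finset.Icc 1 i, (a t : ℚ) with hSidef
  have hprec : ∀ j, j ≠ i → prec a' j = prec a j := by
    intro j hj
    unfold prec
    rw [hS j]
    by_cases h : i + 1 ≤ j
    · have h1 : i + 1 ∈ Finset.Icc 1 j := by simp [Finset.mem_Icc]; omega
      have h2 : i ∈ Finset.Icc 1 j := by simp [Finset.mem_Icc]; omega
      rw [if_pos h1, if_pos h2]; ring
    · have h1 : i + 1 ∉ Finset.Icc 1 j := by simp [Finset.mem_Icc]; omega
      have h2 : i ∉ Finset.Icc 1 j := by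
        simp only [Finset.mem_Icc]; omega
      rw [if_neg h1, if_neg h2]; ring
  have hSi1 : (1:ℚ) ≤ Si := by
    have : (a i : ℚ) ≤ Si := by
      apply Finset.single_le_sum (f := fun t => (a t : ℚ))
      · intro t _; positivity
      · simp [Finset.mem_Icc]; omega
    rw [hai] at this; exact_mod_cast this
  have hSipos : (0:ℚ) < Si := lt_of_lt_of_le one_pos hSi1
  have hSsucc : (∑ t ∈ Finset.Icc 1 (i+1), (a t : ℚ)) = Si := by
    rw [Finset.sum_Icc_succ_top (by omega : 1 ≤ i + 1)]
    rw [hai1]; simp [hSidef]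
  have hpreci : prec a i = Si / i := rfl
  have hpreci1 : prec a' (i+1) = Si / (i+1) := by
    unfold prec
    rw [hS (i+1)]
    have h1 : i + 1 ∈ Finset.Icc 1 (i+1) := by simp [Finset.mem_Icc]
    have h2 : i ∈ Finset.Icc 1 (i+1) := by simp [Finset.mem_Icc]; omega
    rw [if_pos h1, if_pos h2, hSsucc]
    push_cast; ring
  -- denominators equal
  have hmem_i : i ∈ Finset.Icc 1 K := by simp [Finset.mem_Icc]; omega
  have hmem_i1 : i + 1 ∈ Finset.Icc 1 K := by simp [Finset.mem_Icc]; omega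
  have hden : (∑ t ∈ Finset.Icc 1 K, (a' t : ℚ)) = ∑ t ∈ Finset.Icc 1 K, (a t : ℚ) := by
    rw [hS K, if_pos hmem_i1, if_pos hmem_i]; ring
  have hmpos : (0:ℚ) < ∑ t ∈ Finset.Icc 1 K, (a t : ℚ) := by
    have : (a i : ℚ) ≤ ∑ t ∈ Finset.Icc 1 K, (a t : ℚ) := by
      apply Finset.single_le_sum (f := fun t => (a t : ℚ))
      · intro t _; positivity
      · exact hmem_i
    rw [hai] at this
    exact lt_of_lt_of_le one_pos (by exact_mod_cast this)
  -- numerator difference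
  have hnum : (∑ t ∈ Finset.Icc 1 K, (a t : ℚ) * prec a t)
      - (∑ t ∈ Finset.Icc 1 K, (a' t : ℚ) * prec a' t)
      = Si / i - Si / (i+1) := by
    rw [← Finset.sum_sub_distrib]
    rw [Finset.sum_eq_add_of_mem i (i+1) hmem_i hmem_i1 hne ?_]
    · have e1 : (a i : ℚ) * prec a i - (a' i : ℚ) * prec a' i = Si / i := by
        rw [hai, ha'i, hpreci]; push_cast; ring
      have e2 : (a (i+1) : ℚ) * prec a (i+1) - (a' (i+1) : ℚ) * prec a' (i+1)
          = -(Si / (i+1)) := by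
        rw [hai1, ha'i1, hpreci1]; push_cast; ring
      rw [e1, e2]; ring
    · intro t _ ht
      obtain ⟨h1, h2⟩ := ht
      rw [ha'other t h1 h2, hprec t h1]
      ring
  have hdiffpos : (0:ℚ) < Si / i - Si / (i+1) := by
    have : Si / (i+1) < Si / i := by
      apply div_lt_div_of_pos_left hSipos
      · exact_mod_cast Nat.pos_of_ne_zero (by omega)
      · exact_mod_cast Nat.lt_succ_self i
    linarith
  unfold AP
  rw [hden]
  apply div_lt_div_of_pos_right ?_ hmpos
  linarith [hnum, hdiffpos]
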